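/- For every integrable real-valued measurable function g of (Y, V), the parallel inverse-probability-weighted estimating function U_g = (R/π(V)) · g(Y, V) − ((1 − R)/(1 − π(V))) · E[g(Y, V) | V, L] has conditional mean zero given the covariates: E[U_g | σ(V, L)] = 0 P-a.s. -/

import Mathlib

open MeasureTheory ProbabilityTheory

/-- The parallel IPW estimating function
`U_g = (R/π(V)) ⬝ g(Y, V) − ((1 − R)/(1 − π(V))) ⬝ E[g(Y, V) | V, L]`
has conditional mean zero given the covariates: `E[U_g | σ(V, L)] = 0` a.s. -/
theorem ipw_estimating_function_conditional_mean_zero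
    {Ω : Type*} {mΩ : MeasurableSpace Ω} [StandardBorelSpace Ω] [Nonempty Ω]
    {P : Measure Ω} [IsProbabilityMeasure P]
    {𝒱 𝓛 𝒴 : Type*} [m𝒱 : MeasurableSpace 𝒱] [m𝓛 : MeasurableSpace 𝓛]
    [m𝒴 : MeasurableSpace 𝒴]
    (V : Ω → 𝒱) (L : Ω → 𝓛) (Y : Ω → 𝒴)
    (hV : Measurable V) (hL : Measurable L) (hY : Measurable Y)
    (R : Ω → ℝ) (hR : Measurable R) (hR01 : ∀ ω, R ω = 0 ∨ R ω = 1)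
    (π : 𝒱 → ℝ) (hπ : Measurable π)
    -- `π(V)` is a version of `E[R | σ(V)]`
    (hπV : P[R | MeasurableSpace.comap V m𝒱] =ᵐ[P] fun ω => π (V ω))
    -- positivity
    (δ : ℝ) (hδ0 : 0 < δ) (hδhalf : δ < 1 / 2)
    (hpos : ∀ᵐ ω ∂P, δ ≤ π (V ω) ∧ π (V ω) ≤ 1 - δ)
    -- ignorability: `R ⟂ (Y, L) | σ(V)`
    (hign : CondIndepFun (MeasurableSpace.comap V m𝒱) (hV.comap_le) R
      (fun ω => (Y ω, L ω)) P)
    (g : 𝒴 × 𝒱 → ℝ) (hg : Measurable g)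
    (hgint : Integrable (fun ω => g (Y ω, V ω)) P) :
    P[fun ω => (R ω / π (V ω)) * g (Y ω, V ω)
          - ((1 - R ω) / (1 - π (V ω)))
            * (P[fun ω' => g (Y ω', V ω')
                | MeasurableSpace.comap (fun ω' => (V ω', L ω')) inferInstance]) ω
        | MeasurableSpace.comap (fun ω' => (V ω', L ω')) inferInstance]
      =ᵐ[P] 0 := by
  classical
  have hYL : Measurable[mΩ] fun ω => (Y ω, L ω) := hY.prodMk hL
  have hVL : Measurable[mΩ] fun ω => (V ω, L ω) := hV.prodMk hL
  have hW : Measurable[mΩ] fun ω => (V ω, Y ω, L ω) := hV.prodMk hYL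
  have hmV_le : (MeasurableSpace.comap V m𝒱) ≤ mΩ := hV.comap_le
  have hmVL_le : (MeasurableSpace.comap (fun ω' => (V ω', L ω')) inferInstance) ≤ mΩ := hVL.comap_le
  have hmW_le : (MeasurableSpace.comap (fun ω => (V ω, Y ω, L ω)) inferInstance) ≤ mΩ := hW.comap_le
  have hVmV : Measurable[(MeasurableSpace.comap V m𝒱)] V := measurable_iff_comap_le.mpr le_rfl
  have hVLm : Measurable[(MeasurableSpace.comap (fun ω' => (V ω', L ω')) inferInstance)] fun ω => (V ω, L ω) := measurable_iff_comap_le.mpr le_rfl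
  have hWm : Measurable[(MeasurableSpace.comap (fun ω => (V ω, Y ω, L ω)) inferInstance)] fun ω => (V ω, Y ω, L ω) := measurable_iff_comap_le.mpr le_rfl
  have hmV_le_VL : (MeasurableSpace.comap V m𝒱) ≤ (MeasurableSpace.comap (fun ω' => (V ω', L ω')) inferInstance) := by
    intro s hs
    obtain ⟨A, hA, rfl⟩ := hs
    exact ⟨Prod.fst ⁻¹' A, measurable_fst hA, rfl⟩
  have hmV_le_W : (MeasurableSpace.comap V m𝒱) ≤ (MeasurableSpace.comap (fun ω => (V ω, Y ω, L ω)) inferInstance) := by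
    intro s hs
    obtain ⟨A, hA, rfl⟩ := hs
    exact ⟨Prod.fst ⁻¹' A, measurable_fst hA, rfl⟩
  have hmVL_le_W : (MeasurableSpace.comap (fun ω' => (V ω', L ω')) inferInstance) ≤ (MeasurableSpace.comap (fun ω => (V ω, Y ω, L ω)) inferInstance) := by
    intro s hs
    obtain ⟨A, hA, rfl⟩ := hs
    exact ⟨(fun p : 𝒱 × 𝒴 × 𝓛 => (p.1, p.2.2)) ⁻¹' A,
      (measurable_fst.prodMk measurable_snd.snd) hA, rfl⟩
  -- basic measurability / integrability facts
  have hpVm : Measurable[mΩ] fun ω => π (V ω) := hπ.comp hV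
  have hpV_smV : StronglyMeasurable[(MeasurableSpace.comap V m𝒱)] fun ω => π (V ω) := (hπ.comp hVmV).stronglyMeasurable
  have hRb : ∀ ω, ‖R ω‖ ≤ 1 := fun ω => by rcases hR01 ω with h | h <;> simp [h]
  have hRint : Integrable R P :=
    (integrable_const (1 : ℝ)).mono' hR.aestronglyMeasurable (ae_of_all _ hRb)
  have hpV_bd : ∀ᵐ ω ∂P, |π (V ω)| ≤ 1 := by
    filter_upwards [hpos] with ω hω
    rw [abs_le]; constructor <;> [linarith [hω.1]; linarith [hω.2]]
  have hpVint : Integrable (fun ω => π (V ω)) P := by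
    refine (integrable_const (1 : ℝ)).mono' hpVm.aestronglyMeasurable ?_
    filter_upwards [hpV_bd] with ω hω
    simpa [Real.norm_eq_abs] using hω
  -- `R` as an indicator
  have hR_eq : Set.indicator (R ⁻¹' {1}) (fun _ => (1 : ℝ)) = R := by
    funext ω
    rcases hR01 ω with h | h <;>
      simp [Set.indicator_apply, Set.mem_preimage, Set.mem_singleton_iff, h]
  -- conditional independence in terms of conditional expectations of indicators
  have hci := (condIndepFun_iff (MeasurableSpace.comap V m𝒱) hV.comap_le R (fun ω => (Y ω, L ω)) hR hYL P).mp hign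
  -- total integral of `π ∘ V` equals that of `R`
  have htot : ∫ x, π (V x) ∂P = ∫ x, R x ∂P := by
    rw [← integral_condExp hmV_le (f := R) (μ := P)]
    exact (integral_congr_ae hπV.symm).symm ▸ rfl
  -- the generating π-system of `(MeasurableSpace.comap (fun ω => (V ω, Y ω, L ω)) inferInstance)`
  have h_gen : (MeasurableSpace.comap (fun ω => (V ω, Y ω, L ω)) inferInstance) = MeasurableSpace.generateFrom
      {s : Set Ω | ∃ t ∈ Set.image2 (· ×ˢ ·) {A : Set 𝒱 | MeasurableSet A}
        {B : Set (𝒴 × 𝓛) | MeasurableSet B}, (fun ω => (V ω, Y ω, L ω)) ⁻¹' t = s} := by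
    have hpr : (inferInstance : MeasurableSpace (𝒱 × 𝒴 × 𝓛))
        = MeasurableSpace.generateFrom (Set.image2 (· ×ˢ ·)
          {A : Set 𝒱 | MeasurableSet A} {B : Set (𝒴 × 𝓛) | MeasurableSet B}) :=
      generateFrom_prod.symm
    rw [hpr, MeasurableSpace.comap_generateFrom]
    rfl
  have h_pi : IsPiSystem {s : Set Ω | ∃ t ∈ Set.image2 (· ×ˢ ·) {A : Set 𝒱 | MeasurableSet A}
      {B : Set (𝒴 × 𝓛) | MeasurableSet B}, (fun ω => (V ω, Y ω, L ω)) ⁻¹' t = s} :=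
    isPiSystem_prod.comap _
  have key : ∀ s : Set Ω, MeasurableSet[(MeasurableSpace.comap (fun ω => (V ω, Y ω, L ω)) inferInstance)] s →
      ∫ x in s, π (V x) ∂P = ∫ x in s, R x ∂P := by
    intro s hs
    refine MeasurableSpace.induction_on_inter
      (C := fun s _ => ∫ x in s, π (V x) ∂P = ∫ x in s, R x ∂P) (m := (MeasurableSpace.comap (fun ω => (V ω, Y ω, L ω)) inferInstance))
      h_gen h_pi (by simp) ?_ ?_ ?_ s hs
    · rintro t ⟨t', ⟨A, hA, B, hB, rfl⟩, rfl⟩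
      have hsplit : (fun ω => (V ω, Y ω, L ω)) ⁻¹' (A ×ˢ B)
          = (V ⁻¹' A) ∩ ((fun ω => (Y ω, L ω)) ⁻¹' B) := rfl
      rw [hsplit]
      set t2 := (fun ω => (Y ω, L ω)) ⁻¹' B with ht2_def
      have ht2 : MeasurableSet[mΩ] t2 := hYL hB
      have ht1mV : MeasurableSet[(MeasurableSpace.comap V m𝒱)] (V ⁻¹' A) := ⟨A, hA, rfl⟩
      have ht1 : MeasurableSet[mΩ] (V ⁻¹' A) := hmV_le _ ht1mV
      have hind1int : Integrable (Set.indicator t2 fun _ => (1:ℝ)) P :=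
        (integrable_const 1).indicator ht2
      have eR : Set.indicator t2 R = Set.indicator ((R ⁻¹' {1}) ∩ t2) (fun _ => (1:ℝ)) := by
        funext ω
        by_cases h2 : ω ∈ t2
        · rcases hR01 ω with h | h <;>
            simp [Set.indicator_apply, h2, h, Set.mem_inter_iff, Set.mem_preimage]
        · simp [Set.indicator_apply, h2, Set.mem_inter_iff]
      have hprod := hci (R ⁻¹' {1}) t2 ⟨{1}, measurableSet_singleton 1, rfl⟩ ⟨B, hB, rfl⟩
      have hERu : P[Set.indicator (R ⁻¹' {1}) (fun _ => (1:ℝ)) | (MeasurableSpace.comap V m𝒱)]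
          =ᵐ[P] fun ω => π (V ω) := by
        rw [hR_eq]; exact hπV
      have hmul_int : Integrable ((fun ω => π (V ω)) * Set.indicator t2 fun _ => (1:ℝ)) P := by
        refine (integrable_const (1:ℝ)).mono'
          ((hpVm.mul (measurable_const.indicator ht2)).aestronglyMeasurable) ?_
        filter_upwards [hpV_bd] with ω hω
        have hI : |Set.indicator t2 (fun _ => (1:ℝ)) ω| ≤ 1 := by
          by_cases h : ω ∈ t2 <;> simp [h]
        calc ‖((fun ω => π (V ω)) * Set.indicator t2 fun _ => (1:ℝ)) ω‖
            = |π (V ω)| * |Set.indicator t2 (fun _ => (1:ℝ)) ω| := by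
              simp [Real.norm_eq_abs, abs_mul]
          _ ≤ 1 * 1 := mul_le_mul hω hI (abs_nonneg _) zero_le_one
          _ = 1 := mul_one 1
      have hRside : ∫ x in V ⁻¹' A ∩ t2, R x ∂P
          = ∫ x in V ⁻¹' A,
            ((fun ω => π (V ω)) * P[Set.indicator t2 fun _ => (1:ℝ) | (MeasurableSpace.comap V m𝒱)]) x ∂P := by
        rw [← setIntegral_indicator ht2,
          ← setIntegral_condExp hmV_le (hRint.indicator ht2) ht1mV]
        refine setIntegral_congr_ae ht1 ?_
        have hcongr : P[Set.indicator t2 R | (MeasurableSpace.comap V m𝒱)]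
            =ᵐ[P] P[Set.indicator ((R ⁻¹' {1}) ∩ t2) (fun _ => (1:ℝ)) | (MeasurableSpace.comap V m𝒱)] := by rw [eR]
        filter_upwards [hcongr, hprod, hERu] with ω h1 h2 h3 _
        rw [h1, h2]
        simp only [Pi.mul_apply]
        rw [h3]
      have hpside : ∫ x in V ⁻¹' A ∩ t2, π (V x) ∂P
          = ∫ x in V ⁻¹' A,
            ((fun ω => π (V ω)) * P[Set.indicator t2 fun _ => (1:ℝ) | (MeasurableSpace.comap V m𝒱)]) x ∂P := by
        have e2 : Set.indicator t2 (fun x => π (V x))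
            = (fun ω => π (V ω)) * Set.indicator t2 fun _ => (1:ℝ) := by
          funext ω
          by_cases h : ω ∈ t2 <;> simp [Set.indicator_apply, h]
        rw [← setIntegral_indicator ht2 (f := fun x => π (V x)), e2,
          ← setIntegral_condExp hmV_le hmul_int ht1mV]
        refine setIntegral_congr_ae ht1 ?_
        have hmul := condExp_mul_of_stronglyMeasurable_left (m := (MeasurableSpace.comap V m𝒱)) (μ := P) hpV_smV hmul_int hind1int
        filter_upwards [hmul] with ω hω _
        exact hω
      rw [hpside, hRside]
    · intro t htm ht
      rw [setIntegral_compl (hmW_le _ htm) hpVint, setIntegral_compl (hmW_le _ htm) hRint,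
        ht, htot]
    · intro f hdisj hfm hf
      rw [integral_iUnion (fun i => hmW_le _ (hfm i)) hdisj hpVint.integrableOn,
        integral_iUnion (fun i => hmW_le _ (hfm i)) hdisj hRint.integrableOn]
      exact tsum_congr hf
  -- Step A : `E[R | (MeasurableSpace.comap (fun ω => (V ω, Y ω, L ω)) inferInstance)] = π ∘ V`
  have hA : P[R | (MeasurableSpace.comap (fun ω => (V ω, Y ω, L ω)) inferInstance)] =ᵐ[P] fun ω => π (V ω) := by
    refine (ae_eq_condExp_of_forall_setIntegral_eq hmW_le hRint
      (fun s _ _ => hpVint.integrableOn) (fun s hs _ => key s hs) ?_).symm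
    exact (hpV_smV.mono hmV_le_W).aestronglyMeasurable
  have hA2 : P[R | (MeasurableSpace.comap (fun ω' => (V ω', L ω')) inferInstance)] =ᵐ[P] fun ω => π (V ω) :=
    (condExp_condExp_of_le hmVL_le_W hmW_le).symm.trans
      ((condExp_congr_ae hA).trans
        (by rw [condExp_of_stronglyMeasurable hmVL_le (hpV_smV.mono hmV_le_VL) hpVint]))
  -- Step B : the first term
  have hVmW : Measurable[(MeasurableSpace.comap (fun ω => (V ω, Y ω, L ω)) inferInstance)] V := hWm.fst
  have hYmW : Measurable[(MeasurableSpace.comap (fun ω => (V ω, Y ω, L ω)) inferInstance)] Y := hWm.snd.fst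
  have hIg_mW : Measurable[(MeasurableSpace.comap (fun ω => (V ω, Y ω, L ω)) inferInstance)] fun ω => g (Y ω, V ω) := hg.comp (hYmW.prodMk hVmW)
  have hpV_mW : Measurable[(MeasurableSpace.comap (fun ω => (V ω, Y ω, L ω)) inferInstance)] fun ω => π (V ω) := hπ.comp hVmW
  have hq_mW : StronglyMeasurable[(MeasurableSpace.comap (fun ω => (V ω, Y ω, L ω)) inferInstance)] fun ω => g (Y ω, V ω) / π (V ω) :=
    (hIg_mW.div hpV_mW).stronglyMeasurable
  have hf1_eq : (fun ω => R ω / π (V ω) * g (Y ω, V ω))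
      = (fun ω => g (Y ω, V ω) / π (V ω)) * R := by
    funext ω
    show _ = g (Y ω, V ω) / π (V ω) * R ω
    ring
  have hf1int : Integrable (fun ω => R ω / π (V ω) * g (Y ω, V ω)) P := by
    refine (hgint.abs.const_mul δ⁻¹).mono'
      (((hR.div hpVm).mul (hg.comp (hY.prodMk hV))).aestronglyMeasurable) ?_
    filter_upwards [hpos] with ω hω
    have hp : 0 < π (V ω) := lt_of_lt_of_le hδ0 hω.1
    rw [Real.norm_eq_abs, abs_mul, abs_div, abs_of_pos hp]
    calc |R ω| / π (V ω) * |g (Y ω, V ω)| ≤ 1 / δ * |g (Y ω, V ω)| := by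
          refine mul_le_mul_of_nonneg_right ?_ (abs_nonneg _)
          exact div_le_div₀ zero_le_one (by simpa [Real.norm_eq_abs] using hRb ω) hδ0 hω.1
      _ = δ⁻¹ * |g (Y ω, V ω)| := by rw [one_div]
  have hqRint : Integrable ((fun ω => g (Y ω, V ω) / π (V ω)) * R) P := hf1_eq ▸ hf1int
  have hB2 : P[fun ω => R ω / π (V ω) * g (Y ω, V ω) | (MeasurableSpace.comap (fun ω => (V ω, Y ω, L ω)) inferInstance)]
      =ᵐ[P] fun ω => g (Y ω, V ω) := by
    rw [hf1_eq]
    refine (condExp_mul_of_stronglyMeasurable_left hq_mW hqRint hRint).trans ?_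
    filter_upwards [hA, hpos] with ω h1 h2
    simp only [Pi.mul_apply]
    rw [h1]
    exact div_mul_cancel₀ _ (ne_of_gt (lt_of_lt_of_le hδ0 h2.1))
  have hT1 : P[fun ω => R ω / π (V ω) * g (Y ω, V ω) | (MeasurableSpace.comap (fun ω' => (V ω', L ω')) inferInstance)]
      =ᵐ[P] P[fun ω => g (Y ω, V ω) | (MeasurableSpace.comap (fun ω' => (V ω', L ω')) inferInstance)] :=
    (condExp_condExp_of_le hmVL_le_W hmW_le).symm.trans (condExp_congr_ae hB2)
  -- Step C : the second term
  have hceint : Integrable (P[fun ω => g (Y ω, V ω) | (MeasurableSpace.comap (fun ω' => (V ω', L ω')) inferInstance)]) P := integrable_condExp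
  have hce_sm : StronglyMeasurable[(MeasurableSpace.comap (fun ω' => (V ω', L ω')) inferInstance)] (P[fun ω => g (Y ω, V ω) | (MeasurableSpace.comap (fun ω' => (V ω', L ω')) inferInstance)]) :=
    stronglyMeasurable_condExp
  have hpV_mVL : Measurable[(MeasurableSpace.comap (fun ω' => (V ω', L ω')) inferInstance)] fun ω => π (V ω) := hπ.comp hVLm.fst
  have hq2_sm : StronglyMeasurable[(MeasurableSpace.comap (fun ω' => (V ω', L ω')) inferInstance)]
      fun ω => (P[fun ω' => g (Y ω', V ω') | (MeasurableSpace.comap (fun ω' => (V ω', L ω')) inferInstance)]) ω / (1 - π (V ω)) :=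
    (hce_sm.measurable.div (measurable_const.sub hpV_mVL)).stronglyMeasurable
  have hsubRint : Integrable ((fun (_ : Ω) => (1:ℝ)) - R) P := (integrable_const 1).sub hRint
  have hsub : P[(fun (_ : Ω) => (1:ℝ)) - R | (MeasurableSpace.comap (fun ω' => (V ω', L ω')) inferInstance)] =ᵐ[P] fun ω => 1 - π (V ω) := by
    refine (condExp_sub (integrable_const 1) hRint _).trans ?_
    rw [condExp_const hmVL_le]
    filter_upwards [hA2] with ω hω
    simp only [Pi.sub_apply]
    rw [hω]
  have hq2mul_eq : (fun ω => (1 - R ω) / (1 - π (V ω))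
        * (P[fun ω' => g (Y ω', V ω') | (MeasurableSpace.comap (fun ω' => (V ω', L ω')) inferInstance)]) ω)
      = (fun ω => (P[fun ω' => g (Y ω', V ω') | (MeasurableSpace.comap (fun ω' => (V ω', L ω')) inferInstance)]) ω / (1 - π (V ω)))
        * ((fun (_ : Ω) => (1:ℝ)) - R) := by
    funext ω
    show _ = (P[fun ω' => g (Y ω', V ω') | (MeasurableSpace.comap (fun ω' => (V ω', L ω')) inferInstance)]) ω / (1 - π (V ω))
      * ((fun (_ : Ω) => (1:ℝ)) - R) ω
    simp only [Pi.sub_apply]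
    ring
  have hf2int : Integrable (fun ω => (1 - R ω) / (1 - π (V ω))
      * (P[fun ω' => g (Y ω', V ω') | (MeasurableSpace.comap (fun ω' => (V ω', L ω')) inferInstance)]) ω) P := by
    refine (hceint.abs.const_mul δ⁻¹).mono'
      ((((measurable_const.sub hR).div (measurable_const.sub hpVm)).mul
        (hce_sm.mono hmVL_le).measurable).aestronglyMeasurable) ?_
    filter_upwards [hpos] with ω hω
    have h2 : δ ≤ 1 - π (V ω) := by linarith [hω.2]
    have h1 : |1 - R ω| ≤ 1 := by rcases hR01 ω with h | h <;> simp [h]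
    rw [Real.norm_eq_abs, abs_mul, abs_div, abs_of_pos (lt_of_lt_of_le hδ0 h2)]
    calc |1 - R ω| / (1 - π (V ω)) * |(P[fun ω' => g (Y ω', V ω') | (MeasurableSpace.comap (fun ω' => (V ω', L ω')) inferInstance)]) ω|
        ≤ 1 / δ * |(P[fun ω' => g (Y ω', V ω') | (MeasurableSpace.comap (fun ω' => (V ω', L ω')) inferInstance)]) ω| := by
          refine mul_le_mul_of_nonneg_right ?_ (abs_nonneg _)
          exact div_le_div₀ zero_le_one h1 hδ0 h2
      _ = δ⁻¹ * |(P[fun ω' => g (Y ω', V ω') | (MeasurableSpace.comap (fun ω' => (V ω', L ω')) inferInstance)]) ω| := by rw [one_div]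
  have hC2 : P[fun ω => (1 - R ω) / (1 - π (V ω))
        * (P[fun ω' => g (Y ω', V ω') | (MeasurableSpace.comap (fun ω' => (V ω', L ω')) inferInstance)]) ω | (MeasurableSpace.comap (fun ω' => (V ω', L ω')) inferInstance)]
      =ᵐ[P] P[fun ω => g (Y ω, V ω) | (MeasurableSpace.comap (fun ω' => (V ω', L ω')) inferInstance)] := by
    rw [hq2mul_eq]
    refine (condExp_mul_of_stronglyMeasurable_left hq2_sm (hq2mul_eq ▸ hf2int) hsubRint).trans ?_
    filter_upwards [hsub, hpos] with ω h1 h2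
    simp only [Pi.mul_apply]
    rw [h1]
    have hne : (1:ℝ) - π (V ω) ≠ 0 := ne_of_gt (by linarith [h2.2])
    exact div_mul_cancel₀ _ hne
  -- assemble
  show P[(fun ω => R ω / π (V ω) * g (Y ω, V ω))
      - (fun ω => (1 - R ω) / (1 - π (V ω))
        * (P[fun ω' => g (Y ω', V ω') | (MeasurableSpace.comap (fun ω' => (V ω', L ω')) inferInstance)]) ω) | (MeasurableSpace.comap (fun ω' => (V ω', L ω')) inferInstance)] =ᵐ[P] 0
  refine (condExp_sub hf1int hf2int _).trans ?_
  filter_upwards [hT1, hC2] with ω e1 e2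
  simp only [Pi.sub_apply, Pi.zero_apply]
  rw [e1, e2, sub_self]
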